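/- Let U₀ be a utility function with inverse marginal I₀ = (U₀′)^{−1}, let I₁ be an inverse marginal function satisfying the functional equation I₁(a·y) + b·I₁(y) = (1+b)·I₀(c·y) for all y > 0, and let U₁ be the utility function defined by U₁(x) = U₀(1) + p·∫_{I₁((q/p)·U₀′(1))}^{x} I₁^{−1}(ξ) dξ + (1−p)·∫_{I₁(((1−q)/(1−p))·U₀′(1))}^{x} I₁^{−1}(ξ) dξ. For x > 0 set X^u(x) = I₁((q/p)·U₀′(x)), X^d(x) = I₁(((1−q)/(1−p))·U₀′(x)) and π*(x) = (X^u(x) − X^d(x))/(u−d). Then for every x > 0: −x/(u−1) ≤ π*(x) ≤ x/(1−d), x + π*(x)·(u−1) = X^u(x), x + π*(x)·(d−1) = X^d(x), and p·U₁(X^u(x)) + (1−p)·U₁(X^d(x)) = U₀(x); that is, π*(x) attains the supremum in the single-period inverse investment problem. -/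

import Mathlib

open Set Filter MeasureTheory intervalIntegral

noncomputable section

/-- A utility function: `C²` on `(0,∞)`, strictly increasing and strictly concave there,
satisfying the Inada conditions. -/
def IsUtility (U : ℝ → ℝ) : Prop :=
  ContDiffOn ℝ 2 U (Set.Ioi 0) ∧
  (∀ x > 0, 0 < deriv U x) ∧
  (∀ x > 0, deriv (deriv U) x < 0) ∧
  Tendsto (deriv U) (nhdsWithin 0 (Set.Ioi 0)) atTop ∧
  Tendsto (deriv U) atTop (nhds 0)

/-- An inverse marginal function: positive, `C¹` on `(0,∞)`, strictly decreasing derivative,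
with `I(∞)=0` and `I(0+)=∞`. -/
def IsInvMarginal (I : ℝ → ℝ) : Prop :=
  (∀ y > 0, 0 < I y) ∧
  ContDiffOn ℝ 1 I (Set.Ioi 0) ∧
  (∀ y > 0, deriv I y < 0) ∧
  Tendsto I atTop (nhds 0) ∧
  Tendsto I (nhdsWithin 0 (Set.Ioi 0)) atTop

/-- `I` is the inverse of the marginal `U'` on the positive reals: `I = (U')⁻¹`. -/
def InvMarginalOf (I U : ℝ → ℝ) : Prop :=
  (∀ x > 0, I (deriv U x) = x) ∧ (∀ y > 0, 0 < I y ∧ deriv U (I y) = y)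

/-- `J` is the inverse function of `I` on the positive reals. -/
def IsInverseOf (J I : ℝ → ℝ) : Prop :=
  (∀ y > 0, J (I y) = y) ∧ (∀ x > 0, 0 < J x ∧ I (J x) = x)

/-- The single-period inverse investment problem:
`U₀(x) = sup {p·U₁(x+π(u−1)) + (1−p)·U₁(x+π(d−1)) : −x/(u−1) ≤ π ≤ x/(1−d)}` for all `x > 0`. -/
def SPIIP (u d p : ℝ) (U₀ U₁ : ℝ → ℝ) : Prop :=
  ∀ x > 0, U₀ x =
    sSup ((fun pi => p * U₁ (x + pi * (u - 1)) + (1 - p) * U₁ (x + pi * (d - 1))) ''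
      Set.Icc (-(x / (u - 1))) (x / (1 - d)))

/-- continuity of the inverse of a strictly antitone positive surjection on `(0,∞)` -/
lemma aux_contOn_inv (I J : ℝ → ℝ)
    (hIanti : StrictAntiOn I (Ioi 0))
    (hIpos : ∀ y > 0, 0 < I y)
    (hJI : ∀ y > 0, J (I y) = y) (hIJ : ∀ x > 0, 0 < J x ∧ I (J x) = x) :
    ContinuousOn J (Ioi (0:ℝ)) := by
  have hJanti : StrictAntiOn J (Ioi 0) := by
    intro x hx y hy hxy
    rcases hIJ x hx with ⟨hJx, hIJx⟩
    rcases hIJ y hy with ⟨hJy, hIJy⟩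
    rcases lt_trichotomy (J y) (J x) with h | h | h
    · exact h
    · exfalso; rw [← hIJx, ← hIJy, h] at hxy; exact lt_irrefl _ hxy
    · exfalso
      have := hIanti hJx hJy h
      rw [hIJx, hIJy] at this
      exact lt_irrefl _ (hxy.trans this)
  intro x₀ hx₀
  have hmono : StrictMonoOn (fun z => -J z) (Ioi 0) := fun x hx y hy hxy =>
    neg_lt_neg (hJanti hx hy hxy)
  have hJx₀ : 0 < J x₀ := (hIJ x₀ hx₀).1
  have hcont : ContinuousAt (fun z => -J z) x₀ := by
    refine hmono.continuousAt_of_image_mem_nhds (isOpen_Ioi.mem_nhds hx₀) ?_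
    refine mem_of_superset (Iio_mem_nhds (by simpa using hJx₀ : -J x₀ < 0)) ?_
    intro w hw
    have hw' : 0 < -w := by simpa using hw
    refine ⟨I (-w), hIpos _ hw', ?_⟩
    simp [hJI _ hw']
  have : ContinuousAt J x₀ := by
    have h := hcont.neg
    convert h using 1
    funext z
    simp
  exact this.continuousWithinAt

set_option maxHeartbeats 1000000 in
/-- With `U₁` constructed from a solution `I₁` of the functional equation, the
optimal wealths `Xu(x) = I₁((q/p)U₀'(x))`, `Xd(x) = I₁(((1−q)/(1−p))U₀'(x))` and the portfolio
`π*(x) = (Xu(x) − Xd(x))/(u−d)` satisfy the admissibility bounds, the wealth equations, and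
attain the supremum: `p·U₁(Xu(x)) + (1−p)·U₁(Xd(x)) = U₀(x)`. -/
theorem stmt4
    (u d p q a b c : ℝ)
    (hu : 1 < u) (hd0 : 0 < d) (hd1 : d < 1) (hp0 : 0 < p) (hp1 : p < 1)
    (hq : q = (1 - d) / (u - d)) (ha : a = ((1 - p) * q) / (p * (1 - q)))
    (hb : b = (1 - q) / q) (hc : c = (1 - p) / (1 - q))
    (U₀ I₀ I₁ J₁ : ℝ → ℝ)
    (hU₀ : IsUtility U₀) (hI₀ : InvMarginalOf I₀ U₀)
    (hI₁ : IsInvMarginal I₁)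
    (hfeq : ∀ y > 0, I₁ (a * y) + b * I₁ y = (1 + b) * I₀ (c * y))
    (hJ₁ : IsInverseOf J₁ I₁)
    (U₁ : ℝ → ℝ)
    (hU₁def : ∀ x > 0, U₁ x =
      U₀ 1 + p * (∫ ξ in (I₁ ((q / p) * deriv U₀ 1))..x, J₁ ξ)
        + (1 - p) * (∫ ξ in (I₁ (((1 - q) / (1 - p)) * deriv U₀ 1))..x, J₁ ξ)) :
    ∀ x > 0, ∀ Xu Xd πx : ℝ,
      Xu = I₁ ((q / p) * deriv U₀ x) →
      Xd = I₁ (((1 - q) / (1 - p)) * deriv U₀ x) →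
      πx = (Xu - Xd) / (u - d) →
      (-(x / (u - 1)) ≤ πx ∧ πx ≤ x / (1 - d)) ∧
      x + πx * (u - 1) = Xu ∧
      x + πx * (d - 1) = Xd ∧
      p * U₁ Xu + (1 - p) * U₁ Xd = U₀ x := by
  -- basic numerical facts
  have hud : (0:ℝ) < u - d := by linarith
  have hq0 : 0 < q := by rw [hq]; exact div_pos (by linarith) hud
  have hq1 : q < 1 := by
    rw [hq, div_lt_one hud]; linarith
  have hp1' : (0:ℝ) < 1 - p := by linarith
  have hq1' : (0:ℝ) < 1 - q := by linarith
  have hD : ∀ x > (0:ℝ), 0 < deriv U₀ x := hU₀.2.1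
  -- the optimal wealth functions
  set XU : ℝ → ℝ := fun t => I₁ ((q / p) * deriv U₀ t) with hXUdef
  set XD : ℝ → ℝ := fun t => I₁ (((1 - q) / (1 - p)) * deriv U₀ t) with hXDdef
  have hargU : ∀ t > (0:ℝ), 0 < (q / p) * deriv U₀ t := fun t ht => by
    have := hD t ht; positivity
  have hargD : ∀ t > (0:ℝ), 0 < ((1 - q) / (1 - p)) * deriv U₀ t := fun t ht => by
    have := hD t ht; positivity
  have hXUpos : ∀ t > (0:ℝ), 0 < XU t := fun t ht => hI₁.1 _ (hargU t ht)
  have hXDpos : ∀ t > (0:ℝ), 0 < XD t := fun t ht => hI₁.1 _ (hargD t ht)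
  -- the budget identity  q * XU t + (1-q) * XD t = t
  have hbudget : ∀ t > (0:ℝ), q * XU t + (1 - q) * XD t = t := by
    intro t ht
    set y := ((1 - q) / (1 - p)) * deriv U₀ t with hy
    have hy0 : 0 < y := hargD t ht
    have hay : a * y = (q / p) * deriv U₀ t := by
      rw [ha, hy]; field_simp
    have hcy : c * y = deriv U₀ t := by
      rw [hc, hy]; field_simp
    have h1 := hfeq y hy0
    rw [hay, hcy, hI₀.1 t ht] at h1
    have hXU : I₁ ((q / p) * deriv U₀ t) = XU t := rfl
    have hXD : I₁ y = XD t := rfl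
    rw [hXU, hXD, hb] at h1
    field_simp at h1
    linarith
  -- main loop
  intro x hx Xu Xd πx hXu hXd hπ
  have hXu' : Xu = XU x := hXu
  have hXd' : Xd = XD x := hXd
  have hXupos : 0 < Xu := hXu' ▸ hXUpos x hx
  have hXdpos : 0 < Xd := hXd' ▸ hXDpos x hx
  have hbud : q * Xu + (1 - q) * Xd = x := by rw [hXu', hXd']; exact hbudget x hx
  have hqval : q * (u - d) = 1 - d := by rw [hq]; field_simp
  -- wealth equations
  have hwu : x + πx * (u - 1) = Xu := by
    rw [hπ]; field_simp; nlinarith [hbud, hqval]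
  have hwd : x + πx * (d - 1) = Xd := by
    rw [hπ]; field_simp; nlinarith [hbud, hqval]
  have hu1 : (0:ℝ) < u - 1 := by linarith
  have hd1' : (0:ℝ) < 1 - d := by linarith
  refine ⟨⟨?_, ?_⟩, hwu, hwd, ?_⟩
  · rw [show -(x / (u - 1)) = (-x) / (u - 1) from (neg_div _ _).symm, div_le_iff₀ hu1]
    linarith [hXupos, hwu]
  · rw [le_div_iff₀ hd1']
    linarith [hXdpos, hwd]
  -- the value identity
  · -- properties of I₁, J₁
    have hIcont : ContinuousOn I₁ (Ioi 0) := hI₁.2.1.continuousOn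
    have hIanti : StrictAntiOn I₁ (Ioi 0) := by
      refine strictAntiOn_of_deriv_neg (convex_Ioi 0) hIcont ?_
      intro z hz
      rw [interior_Ioi] at hz
      exact hI₁.2.2.1 z hz
    have hJcont : ContinuousOn J₁ (Ioi 0) :=
      aux_contOn_inv I₁ J₁ hIanti hI₁.1 hJ₁.1 hJ₁.2
    -- derivative of deriv U₀
    have hDU1 : ContDiffOn ℝ 1 (deriv U₀) (Ioi 0) := by
      exact hU₀.1.deriv_of_isOpen (m := 1) isOpen_Ioi (by norm_num)
    have hDUdiff : ∀ t ∈ Ioi (0:ℝ), DifferentiableAt ℝ (deriv U₀) t := fun t ht =>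
      (hDU1.differentiableOn one_ne_zero).differentiableAt (isOpen_Ioi.mem_nhds ht)
    have hIdiff : ∀ w ∈ Ioi (0:ℝ), DifferentiableAt ℝ I₁ w := fun w hw =>
      (hI₁.2.1.differentiableOn one_ne_zero).differentiableAt (isOpen_Ioi.mem_nhds hw)
    -- endpoints of the integrals
    set cu : ℝ := I₁ ((q / p) * deriv U₀ 1) with hcu
    set cd : ℝ := I₁ (((1 - q) / (1 - p)) * deriv U₀ 1) with hcd
    have hcupos : 0 < cu := hI₁.1 _ (hargU 1 one_pos)
    have hcdpos : 0 < cd := hI₁.1 _ (hargD 1 one_pos)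
    -- FTC derivative lemma
    have hFTC : ∀ (c₀ : ℝ), 0 < c₀ → ∀ z > (0:ℝ),
        HasDerivAt (fun t => ∫ ξ in c₀..t, J₁ ξ) (J₁ z) z := by
      intro c₀ hc₀ z hz
      have hsub : Set.uIcc c₀ z ⊆ Ioi 0 := by
        intro t ht
        have : min c₀ z ≤ t := ht.1
        have : 0 < min c₀ z := lt_min hc₀ hz
        exact lt_of_lt_of_le this ht.1
      refine integral_hasDerivAt_right ((hJcont.mono hsub).intervalIntegrable) ?_ ?_
      · exact ContinuousOn.stronglyMeasurableAtFilter isOpen_Ioi hJcont z hz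
      · exact hJcont.continuousAt (isOpen_Ioi.mem_nhds hz)
    -- the combined function F
    set F : ℝ → ℝ := fun t =>
      p * (U₀ 1 + p * (∫ ξ in cu..(XU t), J₁ ξ) + (1 - p) * (∫ ξ in cd..(XU t), J₁ ξ))
      + (1 - p) * (U₀ 1 + p * (∫ ξ in cu..(XD t), J₁ ξ) + (1 - p) * (∫ ξ in cd..(XD t), J₁ ξ))
      with hF
    have hFval : ∀ t > (0:ℝ), F t = p * U₁ (XU t) + (1 - p) * U₁ (XD t) := by
      intro t ht
      rw [hU₁def _ (hXUpos t ht), hU₁def _ (hXDpos t ht)]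
    -- F has derivative deriv U₀ t at each t > 0
    have hFderiv : ∀ t > (0:ℝ), HasDerivAt F (deriv U₀ t) t := by
      intro t ht
      have hDt := (hDUdiff t ht).hasDerivAt
      set m : ℝ := deriv (deriv U₀) t with hm
      have hXUd : HasDerivAt XU (deriv I₁ ((q/p) * deriv U₀ t) * ((q/p) * m)) t := by
        have h1 : HasDerivAt (fun s => (q/p) * deriv U₀ s) ((q/p) * m) t := hDt.const_mul _
        exact (hIdiff _ (hargU t ht)).hasDerivAt.comp t h1
      have hXDd : HasDerivAt XD (deriv I₁ (((1-q)/(1-p)) * deriv U₀ t) * (((1-q)/(1-p)) * m)) t := by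
        have h1 : HasDerivAt (fun s => ((1-q)/(1-p)) * deriv U₀ s) (((1-q)/(1-p)) * m) t :=
          hDt.const_mul _
        exact (hIdiff _ (hargD t ht)).hasDerivAt.comp t h1
      set mu := deriv I₁ ((q/p) * deriv U₀ t) * ((q/p) * m) with hmu
      set md := deriv I₁ (((1-q)/(1-p)) * deriv U₀ t) * (((1-q)/(1-p)) * m) with hmd
      -- the budget derivative: q * mu + (1-q) * md = 1
      have hsum : q * mu + (1 - q) * md = 1 := by
        have h1 : HasDerivAt (fun s => q * XU s + (1 - q) * XD s) (q * mu + (1 - q) * md) t :=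
          (hXUd.const_mul q).add (hXDd.const_mul (1 - q))
        have h2 : (fun s => q * XU s + (1 - q) * XD s) =ᶠ[nhds t] id := by
          filter_upwards [isOpen_Ioi.mem_nhds ht] with s hs
          exact hbudget s hs
        have h3 : HasDerivAt (id : ℝ → ℝ) (q * mu + (1 - q) * md) t :=
          h1.congr_of_eventuallyEq h2.symm
        have h4 : HasDerivAt (id : ℝ → ℝ) 1 t := hasDerivAt_id t
        exact (h3.unique h4)
      -- the four integral compositions
      have hA : HasDerivAt (fun s => ∫ ξ in cu..(XU s), J₁ ξ) (J₁ (XU t) * mu) t :=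
        (hFTC cu hcupos _ (hXUpos t ht)).comp t hXUd
      have hB : HasDerivAt (fun s => ∫ ξ in cd..(XU s), J₁ ξ) (J₁ (XU t) * mu) t :=
        (hFTC cd hcdpos _ (hXUpos t ht)).comp t hXUd
      have hC : HasDerivAt (fun s => ∫ ξ in cu..(XD s), J₁ ξ) (J₁ (XD t) * md) t :=
        (hFTC cu hcupos _ (hXDpos t ht)).comp t hXDd
      have hE : HasDerivAt (fun s => ∫ ξ in cd..(XD s), J₁ ξ) (J₁ (XD t) * md) t :=
        (hFTC cd hcdpos _ (hXDpos t ht)).comp t hXDd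
      -- values of J₁ at the optimal wealths
      have hJXU : J₁ (XU t) = (q/p) * deriv U₀ t := hJ₁.1 _ (hargU t ht)
      have hJXD : J₁ (XD t) = ((1-q)/(1-p)) * deriv U₀ t := hJ₁.1 _ (hargD t ht)
      have hcomb : HasDerivAt F
          (p * (0 + p * (J₁ (XU t) * mu) + (1 - p) * (J₁ (XU t) * mu))
          + (1 - p) * (0 + p * (J₁ (XD t) * md) + (1 - p) * (J₁ (XD t) * md))) t := by
        exact ((((hasDerivAt_const t (U₀ 1)).add (hA.const_mul p)).add
            (hB.const_mul (1 - p))).const_mul p).add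
          ((((hasDerivAt_const t (U₀ 1)).add (hC.const_mul p)).add
            (hE.const_mul (1 - p))).const_mul (1 - p))
      convert hcomb using 1
      rw [hJXU, hJXD]
      have hp' : p ≠ 0 := ne_of_gt hp0
      have hp1'' : (1:ℝ) - p ≠ 0 := ne_of_gt hp1'
      field_simp
      linear_combination (- deriv U₀ t) * hsum
    -- F 1 = U₀ 1
    have hXU1 : XU 1 = cu := rfl
    have hXD1 : XD 1 = cd := rfl
    have hF1 : F 1 = U₀ 1 := by
      rw [hF]
      simp only [hXU1, hXD1]
      rw [intervalIntegral.integral_same, intervalIntegral.integral_same,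
        intervalIntegral.integral_symm cd cu]
      ring
    -- constancy of F - U₀ on (0, ∞)
    have hU₀diff : ∀ t ∈ Ioi (0:ℝ), HasDerivAt U₀ (deriv U₀ t) t := fun t ht =>
      ((hU₀.1.differentiableOn two_ne_zero).differentiableAt
        (isOpen_Ioi.mem_nhds ht)).hasDerivAt
    have hG : ∀ t ∈ Ioi (0:ℝ), HasDerivAt (fun s => F s - U₀ s) 0 t := by
      intro t ht
      have := (hFderiv t ht).sub (hU₀diff t ht)
      simp only [sub_self] at this
      exact this
    have hconst : F x - U₀ x = F 1 - U₀ 1 := by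
      refine Convex.is_const_of_fderivWithin_eq_zero (𝕜 := ℝ) (convex_Ioi 0)
        (f := fun s => F s - U₀ s) ?_ ?_ hx (by norm_num : (1:ℝ) ∈ Ioi 0)
      · exact fun t ht => ((hG t ht).differentiableAt).differentiableWithinAt
      · intro t ht
        rw [fderivWithin_of_isOpen isOpen_Ioi ht]
        have := (hG t ht).hasFDerivAt.fderiv
        rw [this]
        ext
        simp
    have hfin : F x = U₀ x := by
      rw [hF1] at hconst; linarith
    rw [hXu', hXd', ← hFval x hx, hfin]
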